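/- Let φ : P₁·A* → P₂·A* be an isomorphism of essential right ideals of A*, where P₁ and P₂ are finite maximal prefix codes. Then φ admits a strict extension if and only if there exist x₀, y₀ ∈ A* such that for every letter α ∈ A: x₀α ∈ P₁, y₀α ∈ P₂, and φ(x₀α) = y₀α. -/

import Mathlib

variable {A : Type*}

/-- `R` is a right ideal of the free monoid `A*`: closed under right concatenation. -/
def IsRightIdeal (R : Set (List A)) : Prop :=
  ∀ r ∈ R, ∀ x : List A, r ++ x ∈ R

/-- A prefix code: no element is a strict prefix of another element. -/
def IsPrefixCode (P : Set (List A)) : Prop :=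
  ∀ p ∈ P, ∀ q ∈ P, p <+: q → p = q

/-- The right ideal `P·A*` generated by `P`. -/
def genIdeal (P : Set (List A)) : Set (List A) :=
  {w | ∃ p ∈ P, ∃ x : List A, w = p ++ x}

/-- A maximal prefix code: a prefix code not strictly contained in any other prefix code. -/
def IsMaximalPrefixCode (P : Set (List A)) : Prop :=
  IsPrefixCode P ∧ ∀ Q : Set (List A), IsPrefixCode Q → P ⊆ Q → P = Q

lemma mem_genIdeal_of_mem {P : Set (List A)} {p : List A} (h : p ∈ P) : p ∈ genIdeal P :=
  ⟨p, h, [], by simp⟩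

lemma mem_genIdeal_of_prefix {P : Set (List A)} {u w : List A}
    (h : u ∈ genIdeal P) (hp : u <+: w) : w ∈ genIdeal P := by
  obtain ⟨p, hpP, t, rfl⟩ := h
  obtain ⟨s, rfl⟩ := hp
  exact ⟨p, hpP, t ++ s, by simp⟩

lemma genIdeal_isRightIdeal (P : Set (List A)) : IsRightIdeal (genIdeal P) := by
  intro r hr x
  exact mem_genIdeal_of_prefix hr ⟨x, rfl⟩

/-- If `x₀ ++ [α] ∈ P` for a prefix code `P`, then `x₀ ∉ genIdeal P`. -/
lemma not_mem_genIdeal_of_snoc_mem {P : Set (List A)} (hP : IsPrefixCode P)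
    {x₀ : List A} {α : A} (h : x₀ ++ [α] ∈ P) : x₀ ∉ genIdeal P := by
  rintro ⟨p, hpP, t, rfl⟩
  have hpre : p <+: (p ++ t) ++ [α] := ⟨t ++ [α], by simp⟩
  have := hP p hpP _ h hpre
  have hlen := congrArg List.length this
  simp at hlen

/-- Maximality: a word not in `genIdeal P` is a prefix of some element of `P`. -/
lemma prefix_of_not_mem_genIdeal {P : Set (List A)} (hP : IsMaximalPrefixCode P)
    {w : List A} (hw : w ∉ genIdeal P) : ∃ p ∈ P, w <+: p := by
  by_contra hcon
  push_neg at hcon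
  have hwP : w ∉ P := fun h => hcon w h (List.prefix_refl w)
  have hpc : IsPrefixCode (P ∪ {w}) := by
    rintro p (hp | rfl) q (hq | rfl) hpq
    · exact hP.1 p hp q hq hpq
    · exact absurd (mem_genIdeal_of_prefix (mem_genIdeal_of_mem hp) hpq) hw
    · exact absurd hpq (hcon q hq)
    · rfl
  have := hP.2 (P ∪ {w}) hpc Set.subset_union_left
  exact hwP (this ▸ Set.mem_union_right P rfl : w ∈ P)

/-- extendability criterion for isomorphisms between finitely generated
essential right ideals: φ has a strict extension iff there are x₀, y₀ with
x₀α ∈ P₁, y₀α ∈ P₂ and φ(x₀α) = y₀α for every letter α. -/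
theorem strict_extension_iff [Fintype A] (hA : 2 ≤ Fintype.card A)
    (P₁ P₂ : Set (List A))
    (h₁ : IsMaximalPrefixCode P₁) (h₂ : IsMaximalPrefixCode P₂)
    (hfin₁ : P₁.Finite) (hfin₂ : P₂.Finite)
    (φ : List A → List A)
    (hbij : Set.BijOn φ (genIdeal P₁) (genIdeal P₂))
    (hhom : ∀ u ∈ genIdeal P₁, ∀ x : List A, φ (u ++ x) = φ u ++ x) :
    (∃ (Φ : List A → List A) (J₁ J₂ : Set (List A)),
      IsRightIdeal J₁ ∧ IsRightIdeal J₂ ∧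
      genIdeal P₁ ⊂ J₁ ∧ genIdeal P₂ ⊆ J₂ ∧
      Set.BijOn Φ J₁ J₂ ∧
      (∀ u ∈ J₁, ∀ x : List A, Φ (u ++ x) = Φ u ++ x) ∧
      (∀ w ∈ genIdeal P₁, Φ w = φ w)) ↔
    (∃ x₀ y₀ : List A, ∀ α : A,
      x₀ ++ [α] ∈ P₁ ∧ y₀ ++ [α] ∈ P₂ ∧ φ (x₀ ++ [α]) = y₀ ++ [α]) := by
  classical
  constructor
  · rintro ⟨Φ, J₁, J₂, hJ₁, hJ₂, hsub, hsub₂, hΦbij, hΦhom, hext⟩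
    -- the set of elements of J₁ not in genIdeal P₁ is finite and nonempty
    set S : Set (List A) := J₁ \ genIdeal P₁ with hS
    have hSne : S.Nonempty := Set.nonempty_of_ssubset hsub
    have hSfin : S.Finite := by
      have hsubU : S ⊆ ⋃ p ∈ P₁, {l : List A | l <+: p} := by
        intro w hw
        obtain ⟨p, hpP, hpre⟩ := prefix_of_not_mem_genIdeal h₁ hw.2
        exact Set.mem_biUnion hpP hpre
      refine Set.Finite.subset (Set.Finite.biUnion hfin₁ ?_) hsubU
      intro p _
      have : {l : List A | l <+: p} = {l | l ∈ p.inits} := by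
        ext l; simp [List.mem_inits]
      rw [this]
      exact p.inits.finite_toSet
    obtain ⟨x₀, hx₀S, hmax⟩ := Set.Finite.exists_maximalFor List.length S hSfin hSne
    have hx₀J : x₀ ∈ J₁ := hx₀S.1
    have hx₀n : x₀ ∉ genIdeal P₁ := hx₀S.2
    -- every x₀ ++ [α] lies in P₁
    have hstep : ∀ α : A, x₀ ++ [α] ∈ P₁ := by
      intro α
      have hmem : x₀ ++ [α] ∈ J₁ := hJ₁ x₀ hx₀J [α]
      have hgen : x₀ ++ [α] ∈ genIdeal P₁ := by
        by_contra hn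
        have : x₀ ++ [α] ∈ S := ⟨hmem, hn⟩
        have hle : x₀.length ≤ (x₀ ++ [α]).length := by simp
        have := hmax this hle
        simp at this
      obtain ⟨p, hpP, t, ht⟩ := hgen
      have hpre : p <+: x₀ ++ [α] := ⟨t, ht.symm⟩
      rcases List.prefix_concat_iff.mp hpre with h | h
      · rwa [← h]
      · exact absurd (mem_genIdeal_of_prefix (mem_genIdeal_of_mem hpP) h) hx₀n
    -- y₀ := Φ x₀
    refine ⟨x₀, Φ x₀, fun α => ?_⟩
    have hx₀α : x₀ ++ [α] ∈ genIdeal P₁ := mem_genIdeal_of_mem (hstep α)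
    have hφeq : φ (x₀ ++ [α]) = Φ x₀ ++ [α] := by
      rw [← hext _ hx₀α, hΦhom x₀ hx₀J [α]]
    have hy₀n : Φ x₀ ∉ genIdeal P₂ := by
      intro hy
      obtain ⟨u, hu, hφu⟩ := hbij.2.2 hy
      have : Φ u = Φ x₀ := by rw [hext _ hu, hφu]
      have := hΦbij.2.1 (hsub.1 hu) hx₀J this
      exact hx₀n (this ▸ hu)
    have hy₀α : Φ x₀ ++ [α] ∈ P₂ := by
      have hgen : φ (x₀ ++ [α]) ∈ genIdeal P₂ := hbij.1 hx₀α
      rw [hφeq] at hgen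
      obtain ⟨q, hqP, s, hs⟩ := hgen
      have hpre : q <+: Φ x₀ ++ [α] := ⟨s, hs.symm⟩
      rcases List.prefix_concat_iff.mp hpre with h | h
      · rwa [← h]
      · exact absurd (mem_genIdeal_of_prefix (mem_genIdeal_of_mem hqP) h) hy₀n
    exact ⟨hstep α, hy₀α, hφeq⟩
  · rintro ⟨x₀, y₀, hxy⟩
    obtain ⟨α₀⟩ : Nonempty A := Fintype.card_pos_iff.mp (by omega)
    have hx₀n : x₀ ∉ genIdeal P₁ := not_mem_genIdeal_of_snoc_mem h₁.1 (hxy α₀).1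
    have hy₀n : y₀ ∉ genIdeal P₂ := not_mem_genIdeal_of_snoc_mem h₂.1 (hxy α₀).2.1
    set J₁ : Set (List A) := genIdeal P₁ ∪ genIdeal {x₀} with hJ₁def
    set J₂ : Set (List A) := genIdeal P₂ ∪ genIdeal {y₀} with hJ₂def
    set Φ : List A → List A := fun w => if x₀ <+: w then y₀ ++ w.drop x₀.length else φ w
      with hΦdef
    -- key: Φ agrees with φ on genIdeal P₁
    have hagree : ∀ w ∈ genIdeal P₁, Φ w = φ w := by
      intro w hw
      by_cases hp : x₀ <+: w
      · obtain ⟨t, rfl⟩ := hp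
        have ht : t ≠ [] := by rintro rfl; simp at hw; exact hx₀n hw
        obtain ⟨β, t', rfl⟩ := List.exists_cons_of_ne_nil ht
        have heq : x₀ ++ β :: t' = (x₀ ++ [β]) ++ t' := by simp
        have hmem : x₀ ++ [β] ∈ genIdeal P₁ := mem_genIdeal_of_mem (hxy β).1
        calc Φ (x₀ ++ β :: t') = y₀ ++ β :: t' := by
              simp [hΦdef, List.prefix_append]
          _ = φ (x₀ ++ β :: t') := by
              rw [heq, hhom _ hmem t', (hxy β).2.2]; simp
      · simp [hΦdef, hp]
    have hxmem : ∀ w, x₀ <+: w → Φ w = y₀ ++ w.drop x₀.length := by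
      intro w hp; simp [hΦdef, hp]
    -- x₀-prefixed words with nonempty tail are in genIdeal P₁ (and similarly y₀, P₂)
    have htail₁ : ∀ t : List A, t ≠ [] → x₀ ++ t ∈ genIdeal P₁ := by
      intro t ht
      obtain ⟨β, t', rfl⟩ := List.exists_cons_of_ne_nil ht
      exact mem_genIdeal_of_prefix (mem_genIdeal_of_mem (hxy β).1) ⟨t', by simp⟩
    have htail₂ : ∀ t : List A, t ≠ [] → y₀ ++ t ∈ genIdeal P₂ := by
      intro t ht
      obtain ⟨β, t', rfl⟩ := List.exists_cons_of_ne_nil ht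
      exact mem_genIdeal_of_prefix (mem_genIdeal_of_mem (hxy β).2.1) ⟨t', by simp⟩
    -- no element of genIdeal P₁ is a proper prefix of x₀
    have hnopre : ∀ u ∈ genIdeal P₁, ¬ u <+: x₀ := by
      intro u hu hpre
      exact hx₀n (mem_genIdeal_of_prefix hu hpre)
    refine ⟨Φ, J₁, J₂, ?_, ?_, ?_, Set.subset_union_left, ⟨?_, ?_, ?_⟩, ?_, hagree⟩
    · intro r hr x
      rcases hr with hr | hr
      · exact Or.inl (genIdeal_isRightIdeal P₁ r hr x)
      · exact Or.inr (genIdeal_isRightIdeal {x₀} r hr x)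
    · intro r hr x
      rcases hr with hr | hr
      · exact Or.inl (genIdeal_isRightIdeal P₂ r hr x)
      · exact Or.inr (genIdeal_isRightIdeal {y₀} r hr x)
    · constructor
      · exact Set.subset_union_left
      · intro hsub
        exact hx₀n (hsub (Or.inr (mem_genIdeal_of_mem rfl)))
    · -- MapsTo
      intro w hw
      rcases hw with hw | hw
      · rw [hagree w hw]; exact Or.inl (hbij.1 hw)
      · obtain ⟨p, rfl, t, rfl⟩ := hw
        rw [hxmem _ ⟨t, rfl⟩, List.drop_left]
        exact Or.inr ⟨y₀, rfl, t, rfl⟩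
    · -- InjOn
      intro w hw w' hw' heq
      have key : ∀ v, v ∈ J₁ → v ∉ genIdeal P₁ → v = x₀ := by
        intro v hv hvn
        rcases hv with hv | hv
        · exact absurd hv hvn
        · obtain ⟨p, rfl, t, rfl⟩ := hv
          rcases eq_or_ne t [] with rfl | ht
          · simp
          · exact absurd (htail₁ t ht) hvn
      by_cases h1 : w ∈ genIdeal P₁ <;> by_cases h2 : w' ∈ genIdeal P₁
      · rw [hagree w h1, hagree w' h2] at heq
        exact hbij.2.1 h1 h2 heq
      · have hw'x : w' = x₀ := key w' hw' h2
        rw [hagree w h1, hw'x, hxmem _ (List.prefix_refl x₀)] at heq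
        simp at heq
        exact absurd (heq ▸ hbij.1 h1) hy₀n
      · have hwx : w = x₀ := key w hw h1
        rw [hagree w' h2, hwx, hxmem _ (List.prefix_refl x₀)] at heq
        simp at heq
        have := hbij.1 h2
        rw [← heq] at this
        exact absurd this hy₀n
      · rw [key w hw h1, key w' hw' h2]
    · -- SurjOn
      intro v hv
      rcases hv with hv | hv
      · obtain ⟨u, hu, hφu⟩ := hbij.2.2 hv
        exact ⟨u, Or.inl hu, by rw [hagree u hu, hφu]⟩
      · obtain ⟨q, rfl, t, rfl⟩ := hv
        refine ⟨x₀ ++ t, Or.inr ⟨x₀, rfl, t, rfl⟩, ?_⟩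
        rw [hxmem _ ⟨t, rfl⟩]
        simp
    · -- homomorphism
      intro u hu x
      by_cases hp : x₀ <+: u
      · obtain ⟨t, rfl⟩ := hp
        rw [hxmem _ ⟨t, rfl⟩, List.append_assoc, hxmem _ ⟨t ++ x, rfl⟩]
        simp
      · have hu' : u ∈ genIdeal P₁ := by
          rcases hu with hu | hu
          · exact hu
          · obtain ⟨p, rfl, t, rfl⟩ := hu
            exact absurd ⟨t, rfl⟩ hp
        have hnp : ¬ x₀ <+: u ++ x := by
          intro hpre
          rcases List.prefix_or_prefix_of_prefix hpre (List.prefix_append u x) with h | h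
          · exact hp h
          · exact hnopre u hu' h
        rw [hagree u hu']
        have : Φ (u ++ x) = φ (u ++ x) := by simp [hΦdef, hnp]
        rw [this, hhom u hu' x]
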